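/- Let M be an n×n matrix over RatFunc ℂ all of whose entries have intDegree ≤ 0. Then det(M - X • 1) ≠ 0 and (det (M - X • 1)).intDegree = n. -/

import Mathlib

set_option synthInstance.maxHeartbeats 1000000
set_option maxHeartbeats 1000000

open Matrix

open Multiplicative RatFunc WithZero in
theorem det_sub_X_smul_one_ne_zero_and_intDegree_eq
    {n : ℕ} (M : Matrix (Fin n) (Fin n) (RatFunc ℂ))
    (hdeg : ∀ i j, (M i j).intDegree ≤ 0) :
    (M - (RatFunc.X : RatFunc ℂ) • 1).det ≠ 0 ∧
    ((M - (RatFunc.X : RatFunc ℂ) • 1).det).intDegree = (n : ℤ) := by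
  classical
  set A := M - (RatFunc.X : RatFunc ℂ) • 1 with hA
  let v : Valuation (RatFunc ℂ) ℤᵐ⁰ := inftyValuation ℂ
  -- valuation of an entry of M is ≤ ofAdd 0
  have hvM : ∀ i j, v (M i j) ≤ (ofAdd (0 : ℤ) : Multiplicative ℤ) := by
    intro i j
    by_cases h : M i j = 0
    · simp [h]
    · rw [show v (M i j) = inftyValuationDef ℂ (M i j) from rfl,
        inftyValuation_of_nonzero ℂ h]
      exact WithZero.coe_le_coe.mpr (Multiplicative.ofAdd_le.mpr (hdeg i j))
  have hXlt : ∀ i j, v (M i j) < v (RatFunc.X : RatFunc ℂ) := by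
    intro i j
    have : v (RatFunc.X : RatFunc ℂ) = ((ofAdd (1 : ℤ) : Multiplicative ℤ) : ℤᵐ⁰) := by
      rw [show v (RatFunc.X : RatFunc ℂ) = inftyValuationDef ℂ _ from rfl,
        inftyValuation_of_nonzero ℂ RatFunc.X_ne_zero, RatFunc.intDegree_X, WithZero.exp]
    rw [this]
    refine lt_of_le_of_lt (hvM i j) ?_
    exact_mod_cast Multiplicative.ofAdd_lt.mpr (by norm_num)
  -- entries of A
  have hAentry : ∀ i j, A i j = M i j - if i = j then RatFunc.X else 0 := by
    intro i j
    simp [hA, Matrix.sub_apply, Matrix.smul_apply, Matrix.one_apply, mul_ite]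
  have hAdiag : ∀ i, v (A i i) = ((ofAdd (1 : ℤ) : Multiplicative ℤ) : ℤᵐ⁰) := by
    intro i
    rw [hAentry i i, if_pos rfl, Valuation.map_sub_eq_of_lt_right _ (hXlt i i),
      show v (RatFunc.X : RatFunc ℂ) = inftyValuationDef ℂ _ from rfl,
      inftyValuation_of_nonzero ℂ RatFunc.X_ne_zero, RatFunc.intDegree_X, WithZero.exp]
  have hAle : ∀ i j, v (A i j) ≤ ((ofAdd (1 : ℤ) : Multiplicative ℤ) : ℤᵐ⁰) := by
    intro i j
    rcases eq_or_ne i j with rfl | h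
    · exact (hAdiag i).le
    · rw [hAentry i j, if_neg h, sub_zero]
      refine le_trans (hvM i j) ?_
      exact_mod_cast Multiplicative.ofAdd_le.mpr (by norm_num)
  have hAoff : ∀ i j, i ≠ j → v (A i j) ≤ ((ofAdd (0 : ℤ) : Multiplicative ℤ) : ℤᵐ⁰) := by
    intro i j h
    rw [hAentry i j, if_neg h, sub_zero]
    exact hvM i j
  -- valuation of the identity term
  have hidterm : v (∏ i : Fin n, A i i) = ((ofAdd (n : ℤ) : Multiplicative ℤ) : ℤᵐ⁰) := by
    rw [map_prod]
    simp only [hAdiag]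
    rw [Finset.prod_const, Finset.card_univ, Fintype.card_fin, ← WithZero.coe_pow,
      ← ofAdd_nsmul]
    norm_num
  -- valuation of a non-identity permutation term
  have hterm : ∀ σ : Equiv.Perm (Fin n), σ ≠ 1 →
      v (∏ i : Fin n, A (σ i) i) < ((ofAdd (n : ℤ) : Multiplicative ℤ) : ℤᵐ⁰) := by
    intro σ hσ
    obtain ⟨i₀, hi₀⟩ : ∃ i, σ i ≠ i := by
      by_contra h
      push_neg at h
      exact hσ (Equiv.ext h)
    rw [map_prod, ← Finset.prod_erase_mul _ _ (Finset.mem_univ i₀)]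
    have h1 : ∏ i ∈ Finset.univ.erase i₀, v (A (σ i) i)
        ≤ ∏ _i ∈ Finset.univ.erase i₀, ((ofAdd (1 : ℤ) : Multiplicative ℤ) : ℤᵐ⁰) :=
      Finset.prod_le_prod' fun i _ => hAle (σ i) i
    have h2 : (∏ _i ∈ Finset.univ.erase i₀, ((ofAdd (1 : ℤ) : Multiplicative ℤ) : ℤᵐ⁰))
        = ((ofAdd ((n - 1 : ℕ) : ℤ) : Multiplicative ℤ) : ℤᵐ⁰) := by
      rw [Finset.prod_const, Finset.card_erase_of_mem (Finset.mem_univ i₀), Finset.card_univ,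
        Fintype.card_fin, ← WithZero.coe_pow, ← ofAdd_nsmul]
      norm_num
    have h3 : v (A (σ i₀) i₀) ≤ ((ofAdd (0 : ℤ) : Multiplicative ℤ) : ℤᵐ⁰) := hAoff _ _ hi₀
    calc (∏ i ∈ Finset.univ.erase i₀, v (A (σ i) i)) * v (A (σ i₀) i₀)
        ≤ ((ofAdd ((n - 1 : ℕ) : ℤ) : Multiplicative ℤ) : ℤᵐ⁰) *
          ((ofAdd (0 : ℤ) : Multiplicative ℤ) : ℤᵐ⁰) := by
          exact mul_le_mul' (h2 ▸ h1) h3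
      _ < ((ofAdd (n : ℤ) : Multiplicative ℤ) : ℤᵐ⁰) := by
          rw [← WithZero.coe_mul, ← ofAdd_add]
          rw [WithZero.coe_lt_coe, Multiplicative.ofAdd_lt]
          have hn : 1 ≤ n := by
            rcases Nat.eq_zero_or_pos n with h0 | h
            · subst h0; exact absurd (Subsingleton.elim σ 1) hσ
            · exact h
          omega
  -- valuation of det
  have hdet : v A.det = ((ofAdd (n : ℤ) : Multiplicative ℤ) : ℤᵐ⁰) := by
    rw [Matrix.det_apply, ← Finset.add_sum_erase _ _ (Finset.mem_univ (1 : Equiv.Perm (Fin n)))]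
    have hid : v (Equiv.Perm.sign (1 : Equiv.Perm (Fin n)) •
        ∏ i : Fin n, A ((1 : Equiv.Perm (Fin n)) i) i)
        = ((ofAdd (n : ℤ) : Multiplicative ℤ) : ℤᵐ⁰) := by
      simpa using hidterm
    rw [Valuation.map_add_eq_of_lt_left]
    · exact hid
    · rw [hid]
      refine Valuation.map_sum_lt _ (by exact WithZero.coe_ne_zero) ?_
      intro σ hσ
      rw [Finset.mem_erase] at hσ
      have := hterm σ hσ.1
      rcases Int.units_eq_one_or (Equiv.Perm.sign σ) with h | h <;>
        simpa [h, Units.smul_def] using this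
  constructor
  · intro h
    rw [h] at hdet
    simp at hdet
  · have hne : A.det ≠ 0 := by
      intro h
      rw [h] at hdet
      simp at hdet
    have := hdet
    rw [show v A.det = inftyValuationDef ℂ A.det from rfl,
      inftyValuation_of_nonzero ℂ hne] at this
    exact_mod_cast WithZero.coe_inj.mp this
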